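/- The maps b(x₁,x₂,x₃) = (-x₁+1/2, -x₂, x₃+1/2) and c(x₁,x₂,x₃) = (-x₁, x₂+1/2, -x₃) on the torus T³ = (ℝ/ℤ)³ generate a group acting freely on T³: no nontrivial element of the group generated by b and c has a fixed point. -/
import Mathlib


/-- One circle factor of the torus `T³ = (ℝ/ℤ)³`. -/
abbrev Circ : Type := AddCircle (1 : ℝ)

/-- The torus `T³`. -/
abbrev T3 : Type := Circ × Circ × Circ

/-- The map `b(x₁,x₂,x₃) = (-x₁+1/2, -x₂, x₃+1/2)` on `T³`. -/
noncomputable def bFun : T3 → T3 :=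
  fun x => (-x.1 + ((1/2 : ℝ) : Circ), -x.2.1, x.2.2 + ((1/2 : ℝ) : Circ))

/-- The map `c(x₁,x₂,x₃) = (-x₁, x₂+1/2, -x₃)` on `T³`. -/
noncomputable def cFun : T3 → T3 :=
  fun x => (-x.1, x.2.1 + ((1/2 : ℝ) : Circ), -x.2.2)

lemma half_add_half : ((1/2 : ℝ) : Circ) + ((1/2 : ℝ) : Circ) = 0 := by
  rw [← AddCircle.coe_add]; norm_num

lemma bFun_invol : Function.Involutive bFun := by
  rintro ⟨x1, x2, x3⟩
  simp only [bFun, Prod.mk.injEq]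
  exact ⟨by abel, by abel, by rw [add_assoc, half_add_half, add_zero]⟩

lemma cFun_invol : Function.Involutive cFun := by
  rintro ⟨x1, x2, x3⟩
  simp only [cFun, Prod.mk.injEq]
  exact ⟨by abel, by rw [add_assoc, half_add_half, add_zero], by abel⟩

/-- `b` as a bijection of `T³`. -/
noncomputable def bPerm : Equiv.Perm T3 := bFun_invol.toPerm

/-- `c` as a bijection of `T³`. -/
noncomputable def cPerm : Equiv.Perm T3 := cFun_invol.toPerm


lemma half_ne_zero : ((1/2 : ℝ) : Circ) ≠ 0 := by
  rw [Ne, AddCircle.coe_eq_zero_iff]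
  rintro ⟨n, hn⟩
  simp only [zsmul_eq_mul, smul_eq_mul, mul_one] at hn
  have : (2 : ℝ) * n = 1 := by rw [hn]; norm_num
  have h2 : (2 * n : ℤ) = (1 : ℤ) := by exact_mod_cast this
  omega

lemma neg_half : -((1/2 : ℝ) : Circ) = ((1/2 : ℝ) : Circ) :=
  (neg_eq_of_add_eq_zero_left half_add_half)

lemma bPerm_apply (x : T3) : bPerm x = bFun x := rfl
lemma cPerm_apply (x : T3) : cPerm x = cFun x := rfl

lemma bb : bPerm * bPerm = 1 := Equiv.ext fun x => bFun_invol x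
lemma cc : cPerm * cPerm = 1 := Equiv.ext fun x => cFun_invol x

lemma cb_eq_bc : cPerm * bPerm = bPerm * cPerm := by
  apply Equiv.ext
  rintro ⟨x1, x2, x3⟩
  show cFun (bFun _) = bFun (cFun _)
  simp only [bFun, cFun, Prod.mk.injEq, neg_add, neg_neg, neg_half]

lemma b_no_fix (x : T3) : bPerm x ≠ x := by
  rintro h
  have h3 : x.2.2 + ((1/2 : ℝ) : Circ) = x.2.2 := congrArg (fun y : T3 => y.2.2) h
  exact half_ne_zero (add_eq_left.mp h3)

lemma c_no_fix (x : T3) : cPerm x ≠ x := by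
  rintro h
  have h2 : x.2.1 + ((1/2 : ℝ) : Circ) = x.2.1 := congrArg (fun y : T3 => y.2.1) h
  exact half_ne_zero (add_eq_left.mp h2)

lemma bc_no_fix (x : T3) : (bPerm * cPerm) x ≠ x := by
  rintro h
  have h1 : - -x.1 + ((1/2 : ℝ) : Circ) = x.1 := congrArg (fun y : T3 => y.1) h
  rw [neg_neg] at h1
  exact half_ne_zero (add_eq_left.mp h1)


lemma b_bc : bPerm * (bPerm * cPerm) = cPerm := by rw [← mul_assoc, bb, one_mul]
lemma c_bc : cPerm * (bPerm * cPerm) = bPerm := by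
  rw [← mul_assoc, cb_eq_bc, mul_assoc, cc, mul_one]
lemma bc_b : (bPerm * cPerm) * bPerm = cPerm := by
  rw [mul_assoc, cb_eq_bc, ← mul_assoc, bb, one_mul]
lemma bc_c : (bPerm * cPerm) * cPerm = bPerm := by rw [mul_assoc, cc, mul_one]

lemma bcbc : (bPerm * cPerm) * (bPerm * cPerm) = 1 := by
  rw [← mul_assoc, mul_assoc bPerm, cb_eq_bc, ← mul_assoc bPerm bPerm, bb, one_mul, cc]

/-- The group generated by `b` and `c` acts freely on `T³`: no nontrivial element
of the generated group has a fixed point. -/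
theorem bc_acts_freely :
    ∀ g ∈ Subgroup.closure ({bPerm, cPerm} : Set (Equiv.Perm T3)),
      g ≠ 1 → ∀ x : T3, g x ≠ x := by
  intro g hg
  have key : g = 1 ∨ g = bPerm ∨ g = cPerm ∨ g = bPerm * cPerm := by
    induction hg using Subgroup.closure_induction with
    | mem y hy =>
      rcases hy with h | h
      · exact Or.inr (Or.inl h)
      · exact Or.inr (Or.inr (Or.inl h))
    | one => exact Or.inl rfl
    | mul a b _ _ ha hb =>
      rcases ha with rfl | rfl | rfl | rfl <;> rcases hb with rfl | rfl | rfl | rfl <;>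
        first
        | (simp only [one_mul, mul_one, bb, cc, cb_eq_bc, bcbc, b_bc, c_bc, bc_b, bc_c]; tauto)
        | tauto
    | inv a _ ha =>
      rcases ha with rfl | rfl | rfl | rfl
      · simp
      · exact Or.inr (Or.inl (inv_eq_of_mul_eq_one_right bb))
      · exact Or.inr (Or.inr (Or.inl (inv_eq_of_mul_eq_one_right cc)))
      · exact Or.inr (Or.inr (Or.inr (inv_eq_of_mul_eq_one_right bcbc)))
  intro hne x
  rcases key with rfl | rfl | rfl | rfl
  · exact absurd rfl hne
  · exact b_no_fix x
  · exact c_no_fix x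
  · exact bc_no_fix x
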